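/- Call a : ℤ → ℂ a Hilbert sequence if lim_n ∑_{1≤|k|≤n} a_k/k exists. Suppose a^r (r ∈ ℕ) are Hilbert sequences and a : ℤ → ℂ satisfies limsup_n (log n)^α/n^(α-1) · ∑_{k=-n}^{n} |a^r_k − a_k| → 0 as r → ∞, for some 1 < α ≤ 2. Then a is a Hilbert sequence. -/

import Mathlib

set_option maxHeartbeats 1000000

open Filter Real Finset

/-- `a` is a Hilbert sequence if its symmetric partial sums `∑_{1≤|k|≤n} a_k/k`
converge. -/
def IsHilbertSeq (a : ℤ → ℂ) : Prop :=
  ∃ L : ℂ, Tendsto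
    (fun n : ℕ => ∑ k ∈ (Finset.Icc (-(n : ℤ)) n).erase 0, a k / (k : ℂ)) atTop (nhds L)

/-- The seminorm `‖b‖_α = limsup_n (log n)^α/n^(α-1) ∑_{|k|≤n} |b_k|`
(valued in `ℝ≥0∞`). -/
noncomputable def alphaSeminorm (α : ℝ) (b : ℤ → ℂ) : ENNReal :=
  Filter.limsup (fun n : ℕ => ENNReal.ofReal
    ((Real.log n) ^ α / (n : ℝ) ^ (α - 1) * ∑ k ∈ Finset.Icc (-(n : ℤ)) n, ‖b k‖)) atTop

lemma summable_aux (α : ℝ) (hα : 1 < α) :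
    Summable (fun j : ℕ => if 3 ≤ j then 1/((j:ℝ) * (Real.log j)^α) else 0) := by
  have hα0 : (0:ℝ) ≤ α := by linarith
  set f : ℕ → ℝ := fun j => 1/(((j:ℝ)+3) * (Real.log ((j:ℝ)+3))^α) with hf
  have hlog3 : (1:ℝ) < Real.log 3 := by
    rw [Real.lt_log_iff_exp_lt (by norm_num)]
    calc Real.exp 1 < 2.7182818286 := Real.exp_one_lt_d9
    _ < 3 := by norm_num
  have hlogpos : ∀ j : ℕ, (0:ℝ) < Real.log ((j:ℝ)+3) := by
    intro j
    have h0 : (0:ℝ) ≤ (j:ℝ) := Nat.cast_nonneg j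
    have : (3:ℝ) ≤ (j:ℝ)+3 := by linarith
    have := Real.log_le_log (by norm_num) this
    linarith
  have hdpos : ∀ j : ℕ, 0 < ((j:ℝ)+3) * (Real.log ((j:ℝ)+3))^α := by
    intro j
    have := hlogpos j
    positivity
  have hnonneg : ∀ j, 0 ≤ f j := fun j => by
    have := hdpos j; positivity
  have hanti : ∀ ⦃m n : ℕ⦄, 0 < m → m ≤ n → f n ≤ f m := by
    intro m n _ hmn
    apply one_div_le_one_div_of_le (hdpos m)
    have h1 : ((m:ℝ)+3) ≤ ((n:ℝ)+3) := by
      have : (m:ℝ) ≤ n := Nat.cast_le.mpr hmn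
      linarith
    refine mul_le_mul h1 (Real.rpow_le_rpow (hlogpos m).le
      (Real.log_le_log (by positivity) h1) hα0) (Real.rpow_nonneg (hlogpos m).le α) (by positivity)
  have hsumf : Summable f := by
    rw [← summable_condensed_iff_of_nonneg hnonneg hanti]
    rw [← summable_nat_add_iff 1]
    have hc : Summable (fun k : ℕ => (1/(Real.log 2)^α) * (1/((k+1:ℕ):ℝ)^α)) := by
      apply Summable.mul_left
      exact (summable_nat_add_iff 1).mpr (Real.summable_one_div_nat_rpow.mpr hα)
    apply Summable.of_nonneg_of_le (fun k => by have := hdpos (2^(k+1)); positivity) _ hc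
    intro k
    set A : ℝ := (2:ℝ)^(k+1) with hA
    have hA' : ((2^(k+1) : ℕ) : ℝ) = A := by push_cast; ring
    have hApos : 0 < A := by positivity
    have hL0 : (0:ℝ) < ((k:ℝ)+1) * Real.log 2 := by
      have := Real.log_pos (by norm_num : (1:ℝ) < 2)
      positivity
    have hLge : ((k:ℝ)+1) * Real.log 2 ≤ Real.log (A + 3) := by
      have : ((k:ℝ)+1) * Real.log 2 = Real.log A := by
        rw [hA, Real.log_pow]; push_cast; ring
      rw [this]
      exact Real.log_le_log hApos (by linarith)
    calc (2:ℝ)^(k+1) * f (2^(k+1))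
        = A / ((A+3) * (Real.log (A+3))^α) := by
          rw [hf]; simp only [hA']; rw [hA]; ring
      _ ≤ A / (A * (((k:ℝ)+1) * Real.log 2)^α) := by
          refine div_le_div_of_nonneg_left hApos.le (by positivity) ?_
          refine mul_le_mul (by linarith) (Real.rpow_le_rpow hL0.le hLge hα0)
            (Real.rpow_nonneg hL0.le α) (by linarith)
      _ = 1 / (((k:ℝ)+1) * Real.log 2)^α := by
          rw [mul_comm, ← div_div, div_right_comm, div_self hApos.ne']
      _ = (1/(Real.log 2)^α) * (1/((k+1:ℕ):ℝ)^α) := by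
          rw [Real.mul_rpow (by positivity) (Real.log_nonneg (by norm_num))]
          push_cast
          ring
  rw [← summable_nat_add_iff 3]
  convert hsumf using 2 with j
  · rfl
  rw [if_pos (by omega)]
  push_cast
  ring_nf
  simp only [hf]
  ring_nf

lemma abel_identity (c : ℕ → ℂ) (M : ℕ) :
    ∀ N, M + 1 ≤ N →
    ∑ j ∈ Finset.Ioc M N, c j / (j:ℂ) =
      (∑ j ∈ Finset.Ioc 0 N, c j) / (N:ℂ) - (∑ j ∈ Finset.Ioc 0 M, c j) / ((M:ℂ)+1)
        + ∑ j ∈ Finset.Ico (M+1) N, (∑ i ∈ Finset.Ioc 0 j, c i) * (1/(j:ℂ) - 1/((j:ℂ)+1)) := by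
  intro N hN
  induction N, hN using Nat.le_induction with
  | base =>
    rw [Finset.sum_Ioc_succ_top (le_refl M), Finset.sum_Ioc_succ_top (Nat.zero_le M)]
    simp only [Finset.Ioc_self, Finset.sum_empty, Finset.Ico_self, zero_add]
    push_cast
    ring
  | succ N hN ih =>
    rw [Finset.sum_Ioc_succ_top (le_trans (Nat.le_succ M) hN),
      Finset.sum_Ioc_succ_top (Nat.zero_le _),
      Finset.sum_Ico_succ_top hN, ih]
    push_cast
    ring

lemma abel_bound (c : ℕ → ℂ) (g : ℕ → ℝ) (M N : ℕ) (hM : 1 ≤ M) (hMN : M < N)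
    (hg : ∀ j, M ≤ j → j ≤ N → ‖∑ i ∈ Finset.Ioc 0 j, c i‖ ≤ g j) :
    ‖∑ j ∈ Finset.Ioc M N, c j / (j:ℂ)‖ ≤
      g N / (N:ℝ) + g M / ((M:ℝ)+1)
        + ∑ j ∈ Finset.Ico (M+1) N, g j / ((j:ℝ)*((j:ℝ)+1)) := by
  rw [abel_identity c M N hMN]
  refine le_trans (norm_add_le _ _) ?_
  have hNpos : (0:ℝ) < N := by exact_mod_cast Nat.pos_of_ne_zero (by omega)
  have h1 : ‖(∑ j ∈ Finset.Ioc 0 N, c j) / (N:ℂ) - (∑ j ∈ Finset.Ioc 0 M, c j) / ((M:ℂ)+1)‖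
      ≤ g N / (N:ℝ) + g M / ((M:ℝ)+1) := by
    refine le_trans (norm_sub_le _ _) (add_le_add ?_ ?_)
    · rw [norm_div, Complex.norm_natCast]
      exact div_le_div_of_nonneg_right (hg N (le_of_lt hMN) le_rfl) hNpos.le |>.trans le_rfl
    · have : ((M:ℂ)+1) = ((M+1:ℕ):ℂ) := by push_cast; ring
      rw [norm_div, this, Complex.norm_natCast]
      have : ((M+1:ℕ):ℝ) = (M:ℝ)+1 := by push_cast; ring
      rw [this]
      have hMpos : (0:ℝ) < (M:ℝ)+1 := by positivity
      exact div_le_div_of_nonneg_right (hg M le_rfl (le_of_lt hMN)) hMpos.le |>.trans le_rfl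
  refine add_le_add h1 ?_
  refine le_trans (norm_sum_le _ _) (Finset.sum_le_sum ?_)
  intro j hj
  rw [Finset.mem_Ico] at hj
  have hj1 : 1 ≤ j := le_trans (Nat.le_add_right 1 M) (by omega)
  have hjC : (j:ℂ) ≠ 0 := Nat.cast_ne_zero.mpr (by omega)
  have hjC1 : (j:ℂ)+1 ≠ 0 := by
    have : ((j:ℂ)+1) = ((j+1:ℕ):ℂ) := by push_cast; ring
    rw [this]
    exact Nat.cast_ne_zero.mpr (by omega)
  have hsub : 1/(j:ℂ) - 1/((j:ℂ)+1) = 1/((j:ℂ)*((j:ℂ)+1)) := by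
    field_simp
    ring
  rw [norm_mul, hsub, norm_div, norm_one, norm_mul]
  have e1 : ‖(j:ℂ)‖ = (j:ℝ) := Complex.norm_natCast j
  have e2 : ‖(j:ℂ)+1‖ = (j:ℝ)+1 := by
    have : ((j:ℂ)+1) = ((j+1:ℕ):ℂ) := by push_cast; ring
    rw [this, Complex.norm_natCast]; push_cast; ring
  rw [e1, e2]
  have hd : (0:ℝ) < (j:ℝ)*((j:ℝ)+1) := by positivity
  rw [mul_one_div]
  exact div_le_div_of_nonneg_right (hg j (by omega) (by omega)) hd.le

lemma sum_Icc_int_eq {M : Type*} [AddCommMonoid M] (f : ℤ → M) (n : ℕ) :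
    ∑ k ∈ Finset.Icc (-(n:ℤ)) n, f k = f 0 + ∑ j ∈ Finset.Ioc 0 n, (f j + f (-(j:ℤ))) := by
  induction n with
  | zero => simp
  | succ n ih =>
    have h1 : Finset.Icc (-((n+1:ℕ)):ℤ) ((n+1:ℕ):ℤ)
        = insert (-((n+1:ℕ):ℤ)) (insert ((n+1:ℕ):ℤ) (Finset.Icc (-(n:ℕ):ℤ) (n:ℕ))) := by
      ext k
      simp only [Finset.mem_Icc, Finset.mem_insert]
      push_cast
      omega
    have h2 : (-((n+1:ℕ):ℤ)) ∉ insert ((n+1:ℕ):ℤ) (Finset.Icc (-(n:ℕ):ℤ) (n:ℕ)) := by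
      simp only [Finset.mem_insert, Finset.mem_Icc]
      push_cast
      omega
    have h3 : ((n+1:ℕ):ℤ) ∉ Finset.Icc (-(n:ℕ):ℤ) (n:ℕ) := by
      simp only [Finset.mem_Icc]
      push_cast
      omega
    rw [h1, Finset.sum_insert h2, Finset.sum_insert h3, ih,
      Finset.sum_Ioc_succ_top (Nat.zero_le _)]
    push_cast
    abel

lemma T_eq (b : ℤ → ℂ) (n : ℕ) :
    ∑ k ∈ (Finset.Icc (-(n:ℤ)) n).erase 0, b k / (k:ℂ)
      = ∑ j ∈ Finset.Ioc 0 n, (b j - b (-(j:ℤ))) / ((j:ℕ):ℂ) := by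
  have h0 : (0:ℤ) ∈ Finset.Icc (-(n:ℤ)) n := by
    simp [Finset.mem_Icc]
  have : ∑ k ∈ Finset.Icc (-(n:ℤ)) n, b k / (k:ℂ)
      = b 0 / ((0:ℤ):ℂ) + ∑ k ∈ (Finset.Icc (-(n:ℤ)) n).erase 0, b k / (k:ℂ) :=
    (Finset.add_sum_erase _ _ h0).symm
  have h00 : b 0 / ((0:ℤ):ℂ) = 0 := by
    simp
  rw [h00, zero_add] at this
  rw [← this, sum_Icc_int_eq (fun k => b k / (k:ℂ)) n, h00, zero_add]
  refine Finset.sum_congr rfl ?_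
  intro j hj
  rw [Finset.mem_Ioc] at hj
  have hjC : ((j:ℕ):ℂ) ≠ 0 := Nat.cast_ne_zero.mpr (by omega)
  push_cast
  field_simp
  rw [sub_eq_add_neg]

lemma S_bound (b : ℤ → ℂ) (n : ℕ) :
    ‖∑ j ∈ Finset.Ioc 0 n, (b j - b (-(j:ℤ)))‖ ≤ ∑ k ∈ Finset.Icc (-(n:ℤ)) n, ‖b k‖ := by
  rw [sum_Icc_int_eq (fun k => ‖b k‖) n]
  refine le_trans (norm_sum_le _ _) ?_
  refine le_trans (Finset.sum_le_sum (fun j _ => norm_sub_le (b j) (b (-(j:ℤ))))) ?_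
  exact le_add_of_nonneg_left (norm_nonneg _)

/-- Proposition 3.1(a): if each `a^r` is a Hilbert sequence and
`‖a^r − a‖_α → 0` as `r → ∞` for some `1 < α ≤ 2`, then `a` is a Hilbert
sequence. -/
theorem hilbertSeq_of_seminorm_limit (α : ℝ) (hα1 : 1 < α) (hα2 : α ≤ 2)
    (ar : ℕ → ℤ → ℂ) (a : ℤ → ℂ)
    (hHilbert : ∀ r : ℕ, IsHilbertSeq (ar r))
    (hconv : Tendsto (fun r : ℕ => alphaSeminorm α (fun k => ar r k - a k))
      atTop (nhds 0)) :
    IsHilbertSeq a := by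
  have hα0 : (0:ℝ) ≤ α := by linarith
  -- the summable comparison series and its sum
  have hsum := summable_aux α hα1
  set h : ℕ → ℝ := fun j => if 3 ≤ j then 1/((j:ℝ) * (Real.log j)^α) else 0 with hh
  have hh0 : ∀ j, 0 ≤ h j := by
    intro j
    rw [hh]
    dsimp only
    split
    · have hj3 : (3:ℝ) ≤ (j:ℝ) := by exact_mod_cast ‹3 ≤ j›
      have hlog : 0 < Real.log j := by
        have := Real.log_le_log (by norm_num : (0:ℝ) < 3) hj3
        have h3 : (0:ℝ) < Real.log 3 := Real.log_pos (by norm_num)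
        linarith
      positivity
    · exact le_refl 0
  set C := ∑' j, h j with hCdef
  have hC0 : 0 ≤ C := tsum_nonneg hh0
  -- basic log facts
  have hlog1 : ∀ n : ℕ, 3 ≤ n → 1 ≤ Real.log n := by
    intro n hn
    have hn3 : (3:ℝ) ≤ (n:ℝ) := by exact_mod_cast hn
    rw [Real.le_log_iff_exp_le (by linarith)]
    have he : Real.exp 1 < 3 := by
      calc Real.exp 1 < 2.7182818286 := Real.exp_one_lt_d9
        _ < 3 := by norm_num
    linarith
  have hrp1 : ∀ n : ℕ, 3 ≤ n → 1 ≤ (Real.log n)^α := by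
    intro n hn
    have h1 := hlog1 n hn
    calc (1:ℝ) = (Real.log n)^(0:ℝ) := (Real.rpow_zero _).symm
      _ ≤ (Real.log n)^α := Real.rpow_le_rpow_of_exponent_le h1 hα0
  have hrp2 : ∀ n : ℕ, 3 ≤ n → (n:ℝ)^(α-1) ≤ (n:ℝ) := by
    intro n hn
    have hn1 : (1:ℝ) ≤ (n:ℝ) := by
      have : (3:ℝ) ≤ (n:ℝ) := by exact_mod_cast hn
      linarith
    calc (n:ℝ)^(α-1) ≤ (n:ℝ)^(1:ℝ) :=
          Real.rpow_le_rpow_of_exponent_le hn1 (by linarith)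
      _ = (n:ℝ) := Real.rpow_one _
  -- the main Cauchy claim
  have hCauchy : CauchySeq
      (fun n : ℕ => ∑ k ∈ (Finset.Icc (-(n : ℤ)) n).erase 0, a k / (k : ℂ)) := by
    rw [Metric.cauchySeq_iff]
    intro ε hε
    set δ : ℝ := ε / (4*(3+C)) with hδdef
    have hδ : 0 < δ := by positivity
    -- choose r
    have hev : ∀ᶠ r in atTop,
        alphaSeminorm α (fun k => ar r k - a k) < ENNReal.ofReal δ :=
      hconv.eventually_lt_const (by simpa using ENNReal.ofReal_pos.mpr hδ)
    obtain ⟨r, hr⟩ := hev.exists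
    set b : ℤ → ℂ := fun k => ar r k - a k with hb
    simp only [alphaSeminorm] at hr
    have hev2 := Filter.eventually_lt_of_limsup_lt hr
    obtain ⟨n0, hn0⟩ := Filter.eventually_atTop.mp hev2
    set g : ℕ → ℝ := fun n => δ * (n:ℝ)^(α-1) / (Real.log n)^α with hg
    have hgnn : ∀ n : ℕ, 3 ≤ n → 0 ≤ g n := by
      intro n hn
      have h1 := hlog1 n hn
      rw [hg]
      have : (0:ℝ) < (Real.log n)^α := by positivity
      positivity
    -- sum bound from the seminorm
    have hSig : ∀ n, n0 ≤ n → 3 ≤ n →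
        (∑ k ∈ Finset.Icc (-(n:ℤ)) n, ‖b k‖) ≤ g n := by
      intro n hn1 hn3
      have hx := (ENNReal.ofReal_lt_ofReal_iff hδ).mp (hn0 n hn1)
      have hnpos : (0:ℝ) < (n:ℝ) := by
        have : (3:ℝ) ≤ (n:ℝ) := by exact_mod_cast hn3
        linarith
      have hlp : (0:ℝ) < (Real.log n)^α := by
        have := hlog1 n hn3; positivity
      have hnp : (0:ℝ) < (n:ℝ)^(α-1) := Real.rpow_pos_of_pos hnpos _
      have hcoeff : (0:ℝ) < (Real.log n)^α / (n:ℝ)^(α-1) := by positivity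
      have hSig' : (∑ k ∈ Finset.Icc (-(n:ℤ)) n, ‖b k‖)
          ≤ δ / ((Real.log n)^α / (n:ℝ)^(α-1)) := by
        rw [le_div_iff₀ hcoeff]
        calc (∑ k ∈ Finset.Icc (-(n:ℤ)) n, ‖b k‖) * ((Real.log n)^α / (n:ℝ)^(α-1))
            = (Real.log n)^α / (n:ℝ)^(α-1) * ∑ k ∈ Finset.Icc (-(n:ℤ)) n, ‖b k‖ := by ring
          _ ≤ δ := hx.le
      calc (∑ k ∈ Finset.Icc (-(n:ℤ)) n, ‖b k‖)
          ≤ δ / ((Real.log n)^α / (n:ℝ)^(α-1)) := hSig'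
        _ = g n := by rw [hg, div_div_eq_mul_div]
    -- partial-sum bound
    have hS : ∀ j, n0 ≤ j → 3 ≤ j →
        ‖∑ i ∈ Finset.Ioc 0 j, ((b i : ℂ) - b (-(i:ℤ)))‖ ≤ g j :=
      fun j h1 h2 => (S_bound b j).trans (hSig j h1 h2)
    -- Cauchy data for a^r
    obtain ⟨Lr, hLr⟩ := hHilbert r
    obtain ⟨K1, hK1⟩ := Metric.cauchySeq_iff.mp hLr.cauchySeq (ε/2) (by positivity)
    refine ⟨max (max n0 3) K1, ?_⟩
    set v : ℕ → ℂ := fun n => ∑ k ∈ (Finset.Icc (-(n:ℤ)) n).erase 0, ar r k / (k:ℂ) with hv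
    set u : ℕ → ℂ := fun n => ∑ k ∈ (Finset.Icc (-(n:ℤ)) n).erase 0, a k / (k:ℂ) with huu
    set w : ℕ → ℂ := fun n => ∑ k ∈ (Finset.Icc (-(n:ℤ)) n).erase 0, b k / (k:ℂ) with hw
    have hu_eq : ∀ n, u n = v n - w n := by
      intro n
      rw [huu, hv, hw]
      dsimp only
      rw [← Finset.sum_sub_distrib]
      refine Finset.sum_congr rfl (fun k _ => ?_)
      rw [hb]
      dsimp only
      rw [sub_div]
      ring
    have key : ∀ m n, max (max n0 3) K1 ≤ m → m ≤ n → dist (u m) (u n) < ε := by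
      intro m n hm hmn
      have hmn0 : n0 ≤ m := le_trans (le_max_left _ _ |>.trans (le_max_left _ _) |>.trans le_rfl) hm
      have hm3 : 3 ≤ m := le_trans ((le_max_right n0 3).trans (le_max_left _ _)) hm
      have hmK1 : K1 ≤ m := le_trans (le_max_right _ _) hm
      rcases eq_or_lt_of_le hmn with rfl | hlt
      · simpa using hε
      -- the tail bound on w
      have hwdiff : w n - w m = ∑ j ∈ Finset.Ioc m n,
          ((b (j:ℤ) - b (-(j:ℤ))) / ((j:ℕ):ℂ)) := by
        rw [hw]
        dsimp only
        rw [T_eq b n, T_eq b m, ← Finset.sum_Ioc_consecutive _ (Nat.zero_le m) (le_of_lt hlt)]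
        ring
      have habel : ‖w n - w m‖ ≤
          g n / (n:ℝ) + g m / ((m:ℝ)+1)
            + ∑ j ∈ Finset.Ico (m+1) n, g j / ((j:ℝ)*((j:ℝ)+1)) := by
        rw [hwdiff]
        exact abel_bound (fun j => b (j:ℤ) - b (-(j:ℤ))) g m n (by omega) hlt
          (fun j hj1 hj2 => hS j (le_trans hmn0 hj1) (le_trans hm3 hj1))
      -- bound each of the three pieces
      have hn3 : 3 ≤ n := le_trans hm3 (le_of_lt hlt)
      have hpiece : ∀ p : ℕ, 3 ≤ p → g p / (p:ℝ) ≤ δ := by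
        intro p hp
        have hppos : (0:ℝ) < (p:ℝ) := by
          have : (3:ℝ) ≤ (p:ℝ) := by exact_mod_cast hp
          linarith
        have h1 := hrp1 p hp
        have h2 := hrp2 p hp
        have hlp : (0:ℝ) < (Real.log p)^α := by linarith
        have e : g p / (p:ℝ) = δ * ((p:ℝ)^(α-1) / ((Real.log p)^α * (p:ℝ))) := by
          rw [hg]; ring
        rw [e]
        have hle : (p:ℝ)^(α-1) / ((Real.log p)^α * (p:ℝ)) ≤ 1 := by
          rw [div_le_one (by positivity)]
          calc (p:ℝ)^(α-1) ≤ (p:ℝ) := h2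
            _ ≤ (Real.log p)^α * (p:ℝ) := le_mul_of_one_le_left hppos.le h1
        calc δ * ((p:ℝ)^(α-1) / ((Real.log p)^α * (p:ℝ))) ≤ δ * 1 :=
              mul_le_mul_of_nonneg_left hle hδ.le
          _ = δ := mul_one δ
      have ht1 : g n / (n:ℝ) ≤ δ := hpiece n hn3
      have ht2 : g m / ((m:ℝ)+1) ≤ δ := by
        have hmpos : (0:ℝ) < (m:ℝ) := by
          have : (3:ℝ) ≤ (m:ℝ) := by exact_mod_cast hm3
          linarith
        calc g m / ((m:ℝ)+1) ≤ g m / (m:ℝ) :=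
              div_le_div_of_nonneg_left (hgnn m hm3) hmpos (by linarith)
          _ ≤ δ := hpiece m hm3
      have ht3 : ∑ j ∈ Finset.Ico (m+1) n, g j / ((j:ℝ)*((j:ℝ)+1)) ≤ δ * C := by
        have hpt : ∀ j ∈ Finset.Ico (m+1) n, g j / ((j:ℝ)*((j:ℝ)+1)) ≤ δ * h j := by
          intro j hj
          rw [Finset.mem_Ico] at hj
          have hj3 : 3 ≤ j := by omega
          have hjpos : (0:ℝ) < (j:ℝ) := by
            have : (3:ℝ) ≤ (j:ℝ) := by exact_mod_cast hj3
            linarith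
          have h1 := hrp1 j hj3
          have h2 := hrp2 j hj3
          have hlp : (0:ℝ) < (Real.log j)^α := by linarith
          have hhj : h j = 1/((j:ℝ) * (Real.log j)^α) := by
            rw [hh]; dsimp only; rw [if_pos hj3]
          rw [hhj]
          have e : g j / ((j:ℝ)*((j:ℝ)+1))
              = δ * ((j:ℝ)^(α-1) / ((Real.log j)^α * ((j:ℝ)*((j:ℝ)+1)))) := by
            rw [hg]; dsimp only; rw [div_div, mul_div_assoc]
          rw [e]
          refine mul_le_mul_of_nonneg_left ?_ hδ.le
          rw [div_le_div_iff₀ (by positivity) (by positivity)]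
          calc (j:ℝ)^(α-1) * ((j:ℝ) * (Real.log j)^α)
              ≤ ((j:ℝ)+1) * ((j:ℝ) * (Real.log j)^α) := by
                refine mul_le_mul_of_nonneg_right ?_ (by positivity)
                linarith
            _ = 1 * ((Real.log j)^α * ((j:ℝ)*((j:ℝ)+1))) := by ring
        calc ∑ j ∈ Finset.Ico (m+1) n, g j / ((j:ℝ)*((j:ℝ)+1))
            ≤ ∑ j ∈ Finset.Ico (m+1) n, δ * h j := Finset.sum_le_sum hpt
          _ = δ * ∑ j ∈ Finset.Ico (m+1) n, h j := by rw [Finset.mul_sum]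
          _ ≤ δ * C := by
              refine mul_le_mul_of_nonneg_left ?_ hδ.le
              exact Summable.sum_le_tsum _ (fun i _ => hh0 i) hsum
      have hwsmall : ‖w n - w m‖ ≤ ε/4 := by
        have : g n / (n:ℝ) + g m / ((m:ℝ)+1)
            + ∑ j ∈ Finset.Ico (m+1) n, g j / ((j:ℝ)*((j:ℝ)+1)) ≤ δ*(3+C) := by
          have : δ + δ + δ*C ≤ δ*(3+C) := by nlinarith
          linarith
        have hδ3 : δ*(3+C) = ε/4 := by
          rw [hδdef]
          field_simp
        linarith [habel, this, hδ3.le]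
      -- combine
      have hvd : dist (v m) (v n) < ε/2 := hK1 m hmK1 n (le_trans hmK1 hmn)
      have : dist (u m) (u n) ≤ dist (v m) (v n) + ‖w n - w m‖ := by
        rw [dist_eq_norm, dist_eq_norm, hu_eq m, hu_eq n]
        calc ‖v m - w m - (v n - w n)‖ = ‖(v m - v n) + (w n - w m)‖ := by ring_nf
          _ ≤ ‖v m - v n‖ + ‖w n - w m‖ := norm_add_le _ _
      linarith [this, hvd, hwsmall]
    intro m hm n hn
    rcases le_total m n with hmn | hmn
    · exact key m n hm hmn
    · rw [dist_comm]
      exact key n m hn hmn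
  exact cauchySeq_tendsto_of_complete hCauchy
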